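/- Let 1 < p < ∞ with p ≠ 2, and suppose h : l^2_p → l^n_p is a linear isometry onto a two-dimensional subspace. Then the images h(e_1) and h(e_2) have disjoint supports. -/

import Mathlib

open Finset

/-- The `p`-norm on `ℝⁿ`. -/
noncomputable def pnorm (p : ℝ) {n : ℕ} (x : Fin n → ℝ) : ℝ :=
  (∑ j, |x j| ^ p) ^ (1 / p)


lemma sub_rpow_le {x y q : ℝ} (hx : 0 ≤ x) (hy : 0 ≤ y) (hq0 : 0 ≤ q) (hq1 : q ≤ 1) :
    (x + y) ^ q ≤ x ^ q + y ^ q := by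
  lift x to NNReal using hx
  lift y to NNReal using hy
  have := NNReal.rpow_add_le_add_rpow x y hq0 hq1
  exact_mod_cast this

lemma super_rpow {x y q : ℝ} (hx : 0 ≤ x) (hy : 0 ≤ y) (hq1 : 1 ≤ q) :
    x ^ q + y ^ q ≤ (x + y) ^ q := by
  lift x to NNReal using hx
  lift y to NNReal using hy
  have := NNReal.add_rpow_le_rpow_add x y hq1
  exact_mod_cast this

lemma key_lt (p : ℝ) (hp1 : 1 < p) (hp2 : p < 2) {t : ℝ} (ht0 : 0 < t) (ht1 : t ≤ 1) :
    (1 + t) ^ p + (1 - t) ^ p < 2 + 2 * t ^ p := by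
  set φ : ℝ → ℝ := fun t => 2 + 2 * t ^ p - (1 + t) ^ p - (1 - t) ^ p with hφ
  have hd : ∀ s : ℝ, HasDerivAt φ
      (2 * (p * s ^ (p - 1)) - p * (1 + s) ^ (p - 1) + p * (1 - s) ^ (p - 1)) s := by
    intro s
    have h1 : HasDerivAt (fun s : ℝ => s ^ p) (p * s ^ (p - 1)) s :=
      Real.hasDerivAt_rpow_const (Or.inr hp1.le)
    have h2 : HasDerivAt (fun s : ℝ => (1 + s) ^ p) (p * (1 + s) ^ (p - 1)) s := by
      have := (Real.hasDerivAt_rpow_const (x := 1 + s) (p := p) (Or.inr hp1.le)).comp s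
        ((hasDerivAt_id s).const_add 1)
      simpa [Function.comp_def] using this
    have h3 : HasDerivAt (fun s : ℝ => (1 - s) ^ p) (p * (1 - s) ^ (p - 1) * (-1)) s := by
      have := (Real.hasDerivAt_rpow_const (x := 1 - s) (p := p) (Or.inr hp1.le)).comp s
        ((hasDerivAt_id s).neg.const_add 1)
      simpa [Function.comp_def, sub_eq_add_neg] using this
    have := ((h1.const_mul 2).const_add 2).sub h2 |>.sub h3
    refine this.congr_deriv ?_
    ring
  have hmono : StrictMonoOn φ (Set.Icc 0 1) := by
    apply strictMonoOn_of_deriv_pos (convex_Icc 0 1)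
    · exact fun s _ => (hd s).continuousAt.continuousWithinAt
    · intro s hs
      rw [interior_Icc] at hs
      rw [(hd s).deriv]
      have hq0 : (0:ℝ) ≤ p - 1 := by linarith
      have hq1 : p - 1 ≤ 1 := by linarith
      have hsub : (1 + s) ^ (p - 1) ≤ (1 - s) ^ (p - 1) + (2 * s) ^ (p - 1) := by
        have := sub_rpow_le (x := 1 - s) (y := 2 * s) (by linarith [hs.2]) (by linarith [hs.1]) hq0 hq1
        convert this using 2
        ring
      have h2s : (2 * s) ^ (p - 1) < 2 * s ^ (p - 1) := by
        rw [Real.mul_rpow (by norm_num) hs.1.le]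
        have : (2:ℝ) ^ (p - 1) < 2 ^ (1:ℝ) :=
          Real.rpow_lt_rpow_left_iff (by norm_num) |>.mpr (by linarith)
        have hs' : 0 < s ^ (p - 1) := Real.rpow_pos_of_pos hs.1 _
        rw [Real.rpow_one] at this
        nlinarith
      nlinarith [Real.rpow_pos_of_pos (show (0:ℝ) < 1 + s by linarith [hs.1]) (p-1),
        mul_pos (show (0:ℝ) < p by linarith) hs.1]
  have h0 : φ 0 < φ t := hmono (by constructor <;> norm_num) ⟨ht0.le, ht1⟩ ht0
  have : φ 0 = 0 := by
    simp [hφ, Real.zero_rpow (by positivity : p ≠ 0), Real.one_rpow]; ring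
  rw [this] at h0
  simp only [hφ] at h0
  linarith



lemma key_gt (p : ℝ) (hp2 : 2 < p) {t : ℝ} (ht0 : 0 < t) (ht1 : t ≤ 1) :
    2 + 2 * t ^ p < (1 + t) ^ p + (1 - t) ^ p := by
  have hp1 : 1 < p := by linarith
  set φ : ℝ → ℝ := fun t => (1 + t) ^ p + (1 - t) ^ p - 2 - 2 * t ^ p with hφ
  have hd : ∀ s : ℝ, HasDerivAt φ
      (p * (1 + s) ^ (p - 1) - p * (1 - s) ^ (p - 1) - 2 * (p * s ^ (p - 1))) s := by
    intro s
    have h1 : HasDerivAt (fun s : ℝ => s ^ p) (p * s ^ (p - 1)) s :=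
      Real.hasDerivAt_rpow_const (Or.inr hp1.le)
    have h2 : HasDerivAt (fun s : ℝ => (1 + s) ^ p) (p * (1 + s) ^ (p - 1)) s := by
      have := (Real.hasDerivAt_rpow_const (x := 1 + s) (p := p) (Or.inr hp1.le)).comp s
        ((hasDerivAt_id s).const_add 1)
      simpa [Function.comp_def] using this
    have h3 : HasDerivAt (fun s : ℝ => (1 - s) ^ p) (p * (1 - s) ^ (p - 1) * (-1)) s := by
      have := (Real.hasDerivAt_rpow_const (x := 1 - s) (p := p) (Or.inr hp1.le)).comp s
        ((hasDerivAt_id s).neg.const_add 1)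
      simpa [Function.comp_def, sub_eq_add_neg] using this
    have := ((h2.add h3).sub_const 2).sub (h1.const_mul 2)
    refine this.congr_deriv ?_
    ring
  have hmono : StrictMonoOn φ (Set.Icc 0 1) := by
    apply strictMonoOn_of_deriv_pos (convex_Icc 0 1)
    · exact fun s _ => (hd s).continuousAt.continuousWithinAt
    · intro s hs
      rw [interior_Icc] at hs
      rw [(hd s).deriv]
      have hq1 : (1:ℝ) ≤ p - 1 := by linarith
      have hsuper : (1 - s) ^ (p - 1) + (2 * s) ^ (p - 1) ≤ (1 + s) ^ (p - 1) := by
        have := super_rpow (x := 1 - s) (y := 2 * s) (by linarith [hs.2]) (by linarith [hs.1]) hq1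
        convert this using 2
        ring
      have h2s : 2 * s ^ (p - 1) < (2 * s) ^ (p - 1) := by
        rw [Real.mul_rpow (by norm_num) hs.1.le]
        have : (2:ℝ) ^ (1:ℝ) < 2 ^ (p - 1) :=
          Real.rpow_lt_rpow_left_iff (by norm_num) |>.mpr (by linarith)
        have hs' : 0 < s ^ (p - 1) := Real.rpow_pos_of_pos hs.1 _
        rw [Real.rpow_one] at this
        nlinarith
      nlinarith [mul_pos (show (0:ℝ) < p by linarith) hs.1]
  have h0 : φ 0 < φ t := hmono (by constructor <;> norm_num) ⟨ht0.le, ht1⟩ ht0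
  have : φ 0 = 0 := by
    simp [hφ, Real.zero_rpow (by positivity : p ≠ 0), Real.one_rpow]; ring
  rw [this] at h0
  simp only [hφ] at h0
  linarith

lemma core_lt_aux (p : ℝ) (hp1 : 1 < p) (hp2 : p < 2) {A B : ℝ} (hA : 0 < A) (hB : 0 < B)
    (hBA : B ≤ A) : (A + B) ^ p + |A - B| ^ p < 2 * A ^ p + 2 * B ^ p := by
  set t := B / A with ht
  have ht0 : 0 < t := div_pos hB hA
  have ht1 : t ≤ 1 := (div_le_one hA).mpr hBA
  have e1 : A + B = A * (1 + t) := by rw [ht]; field_simp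
  have e2 : A - B = A * (1 - t) := by rw [ht]; field_simp
  have e3 : B = A * t := by rw [ht]; field_simp
  have habs : |A - B| = A * (1 - t) := by
    rw [abs_of_nonneg (by linarith), e2]
  have hApos : 0 < A ^ p := Real.rpow_pos_of_pos hA p
  rw [e1, habs, e3, Real.mul_rpow hA.le (by linarith), Real.mul_rpow hA.le (by linarith),
    Real.mul_rpow hA.le ht0.le]
  have := key_lt p hp1 hp2 ht0 ht1
  nlinarith

lemma core_lt (p : ℝ) (hp1 : 1 < p) (hp2 : p < 2) {A B : ℝ} (hA : 0 < A) (hB : 0 < B) :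
    (A + B) ^ p + |A - B| ^ p < 2 * A ^ p + 2 * B ^ p := by
  rcases le_total B A with hBA | hAB
  · exact core_lt_aux p hp1 hp2 hA hB hBA
  · have := core_lt_aux p hp1 hp2 hB hA hAB
    rw [abs_sub_comm, add_comm B A] at this
    linarith

lemma pair_abs (a b : ℝ) :
    (|a + b| = |a| + |b| ∧ |a - b| = |(|a| - |b|)|) ∨
    (|a + b| = |(|a| - |b|)| ∧ |a - b| = |a| + |b|) := by
  rcases le_total 0 a with ha | ha <;> rcases le_total 0 b with hb | hb
  · left
    rw [abs_of_nonneg ha, abs_of_nonneg hb, abs_of_nonneg (by linarith)]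
    exact ⟨rfl, rfl⟩
  · right
    constructor
    · rw [abs_of_nonneg ha, abs_of_nonpos hb]
      congr 1
      ring
    · rw [abs_of_nonneg ha, abs_of_nonpos hb, abs_of_nonneg (by linarith)]
      ring
  · right
    constructor
    · rw [abs_of_nonpos ha, abs_of_nonneg hb, ← abs_neg]
      congr 1
      ring
    · rw [abs_of_nonpos ha, abs_of_nonneg hb, abs_of_nonpos (by linarith)]
      ring
  · left
    constructor
    · rw [abs_of_nonpos ha, abs_of_nonpos hb, abs_of_nonpos (by linarith)]
      ring
    · rw [abs_of_nonpos ha, abs_of_nonpos hb, ← abs_neg]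
      congr 1
      ring

lemma abs_lt_two (p : ℝ) (hp1 : 1 < p) (hp2 : p < 2) {a b : ℝ} (ha : a ≠ 0) (hb : b ≠ 0) :
    |a + b| ^ p + |a - b| ^ p < 2 * |a| ^ p + 2 * |b| ^ p := by
  have hA : 0 < |a| := abs_pos.mpr ha
  have hB : 0 < |b| := abs_pos.mpr hb
  rcases pair_abs a b with ⟨h1, h2⟩ | ⟨h1, h2⟩
  · rw [h1, h2]; exact core_lt p hp1 hp2 hA hB
  · rw [h1, h2]
    have := core_lt p hp1 hp2 hA hB
    linarith

lemma abs_le_two (p : ℝ) (hp1 : 1 < p) (hp2 : p < 2) (a b : ℝ) :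
    |a + b| ^ p + |a - b| ^ p ≤ 2 * |a| ^ p + 2 * |b| ^ p := by
  have hp0 : p ≠ 0 := by positivity
  rcases eq_or_ne a 0 with rfl | ha
  · simp [Real.zero_rpow hp0, abs_neg]; linarith
  rcases eq_or_ne b 0 with rfl | hb
  · simp [Real.zero_rpow hp0]; linarith
  · exact (abs_lt_two p hp1 hp2 ha hb).le

lemma core_gt_aux (p : ℝ) (hp2 : 2 < p) {A B : ℝ} (hA : 0 < A) (hB : 0 < B)
    (hBA : B ≤ A) : 2 * A ^ p + 2 * B ^ p < (A + B) ^ p + |A - B| ^ p := by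
  set t := B / A with ht
  have ht0 : 0 < t := div_pos hB hA
  have ht1 : t ≤ 1 := (div_le_one hA).mpr hBA
  have e1 : A + B = A * (1 + t) := by rw [ht]; field_simp
  have e2 : A - B = A * (1 - t) := by rw [ht]; field_simp
  have e3 : B = A * t := by rw [ht]; field_simp
  have habs : |A - B| = A * (1 - t) := by
    rw [abs_of_nonneg (by linarith), e2]
  have hApos : 0 < A ^ p := Real.rpow_pos_of_pos hA p
  rw [e1, habs, e3, Real.mul_rpow hA.le ht0.le, Real.mul_rpow hA.le (by linarith),
    Real.mul_rpow hA.le (by linarith)]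
  have := key_gt p hp2 ht0 ht1
  nlinarith

lemma core_gt (p : ℝ) (hp2 : 2 < p) {A B : ℝ} (hA : 0 < A) (hB : 0 < B) :
    2 * A ^ p + 2 * B ^ p < (A + B) ^ p + |A - B| ^ p := by
  rcases le_total B A with hBA | hAB
  · exact core_gt_aux p hp2 hA hB hBA
  · have := core_gt_aux p hp2 hB hA hAB
    rw [abs_sub_comm, add_comm B A] at this
    linarith

lemma abs_gt_two (p : ℝ) (hp2 : 2 < p) {a b : ℝ} (ha : a ≠ 0) (hb : b ≠ 0) :
    2 * |a| ^ p + 2 * |b| ^ p < |a + b| ^ p + |a - b| ^ p := by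
  have hA : 0 < |a| := abs_pos.mpr ha
  have hB : 0 < |b| := abs_pos.mpr hb
  rcases pair_abs a b with ⟨h1, h2⟩ | ⟨h1, h2⟩
  · rw [h1, h2]; exact core_gt p hp2 hA hB
  · rw [h1, h2]
    have := core_gt p hp2 hA hB
    linarith

lemma abs_ge_two (p : ℝ) (hp2 : 2 < p) (a b : ℝ) :
    2 * |a| ^ p + 2 * |b| ^ p ≤ |a + b| ^ p + |a - b| ^ p := by
  have hp0 : p ≠ 0 := by positivity
  rcases eq_or_ne a 0 with rfl | ha
  · simp [Real.zero_rpow hp0, abs_neg]; linarith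
  rcases eq_or_ne b 0 with rfl | hb
  · simp [Real.zero_rpow hp0]; linarith
  · exact (abs_gt_two p hp2 ha hb).le
/-- For `1 < p < ∞`, `p ≠ 2`, if `h : l^2_p → l^n_p` is a linear isometry, then the images
of the two standard basis vectors have disjoint supports. -/
theorem stmt14 {n : ℕ} (p : ℝ) (hp : 1 < p) (hp2 : p ≠ 2)
    (h : (Fin 2 → ℝ) →ₗ[ℝ] (Fin n → ℝ))
    (hiso : ∀ c : Fin 2 → ℝ, pnorm p (h c) = pnorm p c) :
    ∀ k, h (Pi.single 0 1) k * h (Pi.single 1 1) k = 0 := by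
  have hp0 : p ≠ 0 := by positivity
  set u : Fin n → ℝ := h (Pi.single 0 1) with hu
  set v : Fin n → ℝ := h (Pi.single 1 1) with hv
  have hsum : ∀ c : Fin 2 → ℝ, ∑ j, |h c j| ^ p = ∑ j, |c j| ^ p := by
    intro c
    have h1 := hiso c
    unfold pnorm at h1
    have hL : (0:ℝ) ≤ ∑ j, |h c j| ^ p :=
      Finset.sum_nonneg fun j _ => Real.rpow_nonneg (abs_nonneg _) _
    have hR : (0:ℝ) ≤ ∑ j, |c j| ^ p :=
      Finset.sum_nonneg fun j _ => Real.rpow_nonneg (abs_nonneg _) _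
    calc ∑ j, |h c j| ^ p = ((∑ j, |h c j| ^ p) ^ (1/p)) ^ p := by
          rw [← Real.rpow_mul hL, one_div_mul_cancel hp0, Real.rpow_one]
      _ = ((∑ j, |c j| ^ p) ^ (1/p)) ^ p := by rw [h1]
      _ = ∑ j, |c j| ^ p := by
          rw [← Real.rpow_mul hR, one_div_mul_cancel hp0, Real.rpow_one]
  have S1 : ∑ j, |u j| ^ p = 1 := by
    have := hsum (Pi.single 0 1)
    rw [hu, this]
    simp [Fin.sum_univ_two, Pi.single_apply, Real.zero_rpow hp0]
  have S2 : ∑ j, |v j| ^ p = 1 := by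
    have := hsum (Pi.single 1 1)
    rw [hv, this]
    simp [Fin.sum_univ_two, Pi.single_apply, Real.zero_rpow hp0]
  have S3 : ∑ j, |u j + v j| ^ p = 2 := by
    have := hsum (Pi.single 0 1 + Pi.single 1 1)
    rw [map_add] at this
    simp only [Pi.add_apply, ← hu, ← hv] at this
    rw [this]
    simp [Fin.sum_univ_two, Pi.single_apply, Real.zero_rpow hp0]
    norm_num
  have S4 : ∑ j, |u j - v j| ^ p = 2 := by
    have := hsum (Pi.single 0 1 - Pi.single 1 1)
    rw [map_sub] at this
    simp only [Pi.sub_apply, ← hu, ← hv] at this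
    rw [this]
    simp [Fin.sum_univ_two, Pi.single_apply, Real.zero_rpow hp0]
    norm_num
  intro k
  by_contra hk
  obtain ⟨hku, hkv⟩ := mul_ne_zero_iff.mp hk
  rcases lt_or_gt_of_ne hp2 with hlt | hgt
  · -- p < 2
    have hsum0 : ∑ j, (2 * |u j| ^ p + 2 * |v j| ^ p - |u j + v j| ^ p - |u j - v j| ^ p) = 0 := by
      simp only [Finset.sum_sub_distrib, Finset.sum_add_distrib, ← Finset.mul_sum]
      rw [S1, S2, S3, S4]; norm_num
    have hz := (Finset.sum_eq_zero_iff_of_nonneg (fun j _ => by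
        have := abs_le_two p hp hlt (u j) (v j); linarith)).mp hsum0 k (mem_univ k)
    have := abs_lt_two p hp hlt hku hkv
    linarith
  · -- p > 2
    have hsum0 : ∑ j, (|u j + v j| ^ p + |u j - v j| ^ p - 2 * |u j| ^ p - 2 * |v j| ^ p) = 0 := by
      simp only [Finset.sum_sub_distrib, Finset.sum_add_distrib, ← Finset.mul_sum]
      rw [S1, S2, S3, S4]; norm_num
    have hz := (Finset.sum_eq_zero_iff_of_nonneg (fun j _ => by
        have := abs_ge_two p hgt (u j) (v j); linarith)).mp hsum0 k (mem_univ k)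
    have := abs_gt_two p hgt hku hkv
    linarith
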